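/- In the complete graph K_n oriented as a transitive tournament according to ordering σ, for any subset S ⊆ V, knowing the directions of all edges between S and its complement S^c determines, for each u ∈ S and v ∉ S, whether σ⁻¹(u) < σ⁻¹(v); moreover two vertices u,v not separated by any intervention set in a family I, and such that no chain of known directions forms u→w→v or v→w→u, have undetermined relative order (both orderings are consistent with all revealed cut directions). -/

import Mathlib

private lemma aux_ext {V : Type*} [Fintype V] (σ : V ≃ Fin (Fintype.card V))
    (P : V → V → Prop) (hPt : Transitive P) (hPs : ∀ a b, P a b → σ a < σ b)
    (x y : V) (hxy : x ≠ y) (hnP : ¬ P x y) :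
    ∃ σ' : V ≃ Fin (Fintype.card V), (∀ a b, P a b → σ' a < σ' b) ∧ σ' y < σ' x := by
  classical
  have hPirr : ∀ a, ¬ P a a := fun a h => lt_irrefl _ (hPs a a h)
  set Q : V → V → Prop := fun a b => P a b ∨ ((a = y ∨ P a y) ∧ (b = x ∨ P x b)) with hQ
  have hQt : Transitive Q := by
    rintro a b c (hab | ⟨hby, hbx⟩) (hbc | ⟨hcy, hcx⟩)
    · exact Or.inl (hPt hab hbc)
    · refine Or.inr ⟨Or.inr ?_, hcx⟩
      rcases hcy with rfl | h
      · exact hab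
      · exact hPt hab h
    · refine Or.inr ⟨hby, Or.inr ?_⟩
      rcases hbx with rfl | h
      · exact hbc
      · exact hPt h hbc
    · exfalso
      rcases hbx with rfl | h1 <;> rcases hcy with h2 | h2
      · exact hxy h2
      · exact hnP h2
      · exact hnP (h2 ▸ h1)
      · exact hnP (hPt h1 h2)
  have hQirr : ∀ a, ¬ Q a a := by
    rintro a (h | ⟨hy, hx⟩)
    · exact hPirr a h
    · rcases hy with rfl | h1 <;> rcases hx with h2 | h2
      · exact hxy h2.symm
      · exact hnP h2
      · exact hnP (h2 ▸ h1)
      · exact hnP (hPt h2 h1)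
  have hQyx : Q y x := Or.inr ⟨Or.inl rfl, Or.inl rfl⟩
  set r : V → V → Prop := fun a b => Q a b ∨ a = b with hr
  haveI : IsRefl V r := ⟨fun a => Or.inr rfl⟩
  haveI : IsTrans V r := by
    constructor
    rintro a b c (hab | rfl) (hbc | rfl)
    · exact Or.inl (hQt hab hbc)
    · exact Or.inl hab
    · exact Or.inl hbc
    · exact Or.inr rfl
  haveI : IsAntisymm V r := by
    constructor
    rintro a b (hab | rfl) hba
    · rcases hba with hba | rfl
      · exact absurd (hQt hab hba) (hQirr a)
      · rfl
    · rfl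
  haveI : IsPartialOrder V r := { }
  obtain ⟨s, hs, hrs⟩ := extend_partialOrder r
  haveI := hs
  letI : LinearOrder V :=
    { le := s
      le_refl := hs.refl
      le_trans := fun a b c => hs.trans a b c
      le_antisymm := fun a b => hs.antisymm a b
      le_total := hs.total
      toDecidableLE := Classical.decRel s }
  have hQlt : ∀ a b, Q a b → a < b := by
    intro a b h
    have hne : a ≠ b := by rintro rfl; exact hQirr a h
    exact lt_of_le_of_ne (hrs _ _ (Or.inl h)) hne
  let e : V ≃o Fin (Fintype.card V) := (monoEquivOfFin V rfl).symm
  refine ⟨e.toEquiv, fun a b h => ?_, ?_⟩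
  · exact e.lt_iff_lt.mpr (hQlt a b (Or.inl h))
  · exact e.lt_iff_lt.mpr (hQlt y x hQyx)

/-- In the transitive tournament on `V` given by ordering `σ` (edge `u → v` iff `σ u < σ v`):
(1) the directions of the cut edges of a set `S` determine the relative order of any `u ∈ S`
and `v ∉ S`; (2) if `u, v` are not separated by any set of a family `I` and no chain of
revealed directions connects `u` and `v`, then their relative order is undetermined: some
ordering `σ'` agrees with all revealed cut directions but orders `u, v` oppositely. -/
theorem stmt17 {V : Type*} [Fintype V] (σ : V ≃ Fin (Fintype.card V)) (I : Set (Set V)) :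
    (∀ (S : Set V) (σ' : V ≃ Fin (Fintype.card V)),
      (∀ u ∈ S, ∀ v ∉ S, (σ u < σ v ↔ σ' u < σ' v)) →
      ∀ u ∈ S, ∀ v ∉ S, (σ u < σ v ↔ σ' u < σ' v)) ∧
    (∀ u v : V, u ≠ v →
      (∀ S ∈ I, ¬ ((u ∈ S ∧ v ∉ S) ∨ (v ∈ S ∧ u ∉ S))) →
      ¬ Relation.TransGen
        (fun a b : V => (∃ S ∈ I, (a ∈ S ∧ b ∉ S) ∨ (b ∈ S ∧ a ∉ S)) ∧ σ a < σ b) u v →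
      ¬ Relation.TransGen
        (fun a b : V => (∃ S ∈ I, (a ∈ S ∧ b ∉ S) ∨ (b ∈ S ∧ a ∉ S)) ∧ σ a < σ b) v u →
      ∃ σ' : V ≃ Fin (Fintype.card V),
        (∀ a b : V, (∃ S ∈ I, (a ∈ S ∧ b ∉ S) ∨ (b ∈ S ∧ a ∉ S)) →
          (σ a < σ b ↔ σ' a < σ' b)) ∧
        (σ' v < σ' u ↔ σ u < σ v)) := by
  constructor
  · intro S σ' h u hu v hv
    exact h u hu v hv
  · intro u v huv hsep hTuv hTvu
    set R : V → V → Prop :=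
      fun a b => (∃ S ∈ I, (a ∈ S ∧ b ∉ S) ∨ (b ∈ S ∧ a ∉ S)) ∧ σ a < σ b with hR
    set P := Relation.TransGen R with hP
    have hPt : Transitive P := fun a b c => Relation.TransGen.trans
    have hPs : ∀ a b, P a b → σ a < σ b := by
      intro a b h
      induction h with
      | single h => exact h.2
      | tail _ h ih => exact ih.trans h.2
    have key : ∀ σ' : V ≃ Fin (Fintype.card V),
        (∀ a b, P a b → σ' a < σ' b) →
        (∀ a b : V, (∃ S ∈ I, (a ∈ S ∧ b ∉ S) ∨ (b ∈ S ∧ a ∉ S)) →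
          (σ a < σ b ↔ σ' a < σ' b)) := by
      intro σ' hmono a b hab
      constructor
      · intro h
        exact hmono a b (Relation.TransGen.single ⟨hab, h⟩)
      · intro h
        rcases lt_trichotomy (σ a) (σ b) with h1 | h1 | h1
        · exact h1
        · have : a = b := σ.injective h1
          subst this; exact absurd h (lt_irrefl _)
        · have hsep' : ∃ S ∈ I, (b ∈ S ∧ a ∉ S) ∨ (a ∈ S ∧ b ∉ S) := by
            obtain ⟨S, hS, h'⟩ := hab
            exact ⟨S, hS, h'.symm⟩
          have := hmono b a (Relation.TransGen.single ⟨hsep', h1⟩)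
          exact absurd (h.trans this) (lt_irrefl _)
    rcases lt_trichotomy (σ u) (σ v) with h1 | h1 | h1
    · obtain ⟨σ', hm, hlt⟩ := aux_ext σ P hPt hPs u v huv hTuv
      exact ⟨σ', key σ' hm, by simp [hlt, h1]⟩
    · exact absurd (σ.injective h1) huv
    · obtain ⟨σ', hm, hlt⟩ := aux_ext σ P hPt hPs v u huv.symm hTvu
      refine ⟨σ', key σ' hm, ?_⟩
      exact iff_of_false (asymm hlt) (asymm h1)
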